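/- For all indices 1 ≤ i < j ≤ n, the quantity Φ_{ij} defined by the recursion satisfies the linear system Φ_{ij} · (q^{y_j − y_i + 2} − 1) = q_l^{i−j+1} (q − q^{−1}) + (q^2 − 1)(q_l − 1) · Σ_{k : i < k < j} q_l^{i−k} Φ_{kj}. -/
import Mathlib


/-- The symmetric q-integer `[m] = (q^m - q^{-m})/(q - q⁻¹)` (real powers). -/
noncomputable def qint (q : ℝ) (m : ℤ) : ℝ :=
  (q ^ (m : ℝ) - q ^ (-(m : ℝ))) / (q - q⁻¹)

/-- The coefficients `Φ_{ij}` defined by the downward recursion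
`Φ_{j-1,j} = (q - q⁻¹)/(q^{y_j - y_{j-1} + 2} - 1)` and
`Φ_{ij} = Φ_{i+1,j} · q_l⁻¹ · (q^{y_j - y_{i+1} + 2} - q^{-2l})/(q^{y_j - y_i + 2} - 1)`. -/
noncomputable def Phi (q ql : ℝ) (l : ℕ) (y : ℕ → ℝ) (i j : ℕ) : ℝ :=
  if i + 1 < j then
    Phi q ql l y (i + 1) j * ql⁻¹ *
      (q ^ (y j - y (i + 1) + 2) - q ^ (-(2 * (l : ℝ)))) / (q ^ (y j - y i + 2) - 1)
  else (q - q⁻¹) / (q ^ (y j - y i + 2) - 1)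
termination_by j - i
decreasing_by omega

/-- For `0 < q ≠ 1`, `q ^ x = 1` (real power) forces `x = 0`. -/
lemma rpow_eq_one_imp {q : ℝ} (hq : 0 < q) (hq1 : q ≠ 1) {x : ℝ}
    (hx : q ^ x = 1) : x = 0 := by
  have hlog : Real.log q ≠ 0 := by
    simp only [ne_eq, Real.log_eq_zero, not_or]
    refine ⟨hq.ne', hq1, by linarith⟩
  rw [Real.rpow_def_of_pos hq] at hx
  have h0 : Real.exp (Real.log q * x) = Real.exp 0 := by rw [hx, Real.exp_zero]
  rcases mul_eq_zero.mp (Real.exp_eq_exp.mp h0) with h | h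
  · exact absurd h hlog
  · exact h

/-- the `Φ_{ij}` satisfy the linear system
`Φ_{ij}(q^{y_j-y_i+2} - 1) = q_l^{i-j+1}(q - q⁻¹) + (q² - 1)(q_l - 1) Σ_{i<k<j} q_l^{i-k} Φ_{kj}`. -/
theorem Phi_linear_system (q : ℝ) (hq : 0 < q) (hq1 : q ≠ 1)
    (l : ℕ) (hl : 0 < l) (n : ℕ) (hn : 2 ≤ n) (y : ℕ → ℝ)
    (hy : ∀ i j, 1 ≤ i → i ≤ n → 1 ≤ j → j ≤ n → i ≠ j →
      y j - y i ≠ 0 ∧ y j - y i ≠ -2)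
    (ql : ℝ) (hql : ql = qint q (l + 1) * q ^ (-(l : ℝ)))
    (i j : ℕ) (hi : 1 ≤ i) (hij : i < j) (hj : j ≤ n) :
    Phi q ql l y i j * (q ^ (y j - y i + 2) - 1) =
      ql ^ ((i : ℤ) - (j : ℤ) + 1) * (q - q⁻¹) +
        (q ^ 2 - 1) * (ql - 1) *
          ∑ k ∈ Finset.Ioo i j, ql ^ ((i : ℤ) - (k : ℤ)) * Phi q ql l y k j := by
  have hq0 : q ≠ 0 := hq.ne'
  -- denominator at `i` is nonzero
  have hD : q ^ (y j - y i + 2) - 1 ≠ 0 := by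
    intro h
    have h1 : q ^ (y j - y i + 2) = 1 := by linarith
    have := rpow_eq_one_imp hq hq1 h1
    exact (hy i j hi (by omega) (by omega) hj (by omega)).2 (by linarith)
  -- q - q⁻¹ ≠ 0
  have hqi : q - q⁻¹ ≠ 0 := by
    intro h
    have h2 : q * q = 1 := by
      have : q = q⁻¹ := by linarith
      field_simp [hq0] at this
      linarith [this]
    rcases mul_self_eq_one_iff.mp h2 with h | h
    · exact hq1 h
    · linarith
  -- basic rpow facts
  have e4 : q ^ (-(l : ℝ)) = (q ^ (l : ℝ))⁻¹ := Real.rpow_neg hq.le _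
  have hu0 : q ^ (l : ℝ) ≠ 0 := (Real.rpow_pos_of_pos hq _).ne'
  have e5 : q ^ (-(2 * (l : ℝ))) = ((q ^ (l : ℝ))⁻¹) ^ 2 := by
    rw [show -(2 * (l : ℝ)) = -(l : ℝ) + -(l : ℝ) by ring, Real.rpow_add hq, e4]; ring
  have hqlval : ql = (q ^ (l : ℝ) * q - (q ^ (l : ℝ))⁻¹ * q⁻¹) / (q - q⁻¹) * (q ^ (l : ℝ))⁻¹ := by
    rw [hql, qint, ← e4]
    have e1 : (((l : ℤ) + 1 : ℤ) : ℝ) = (l : ℝ) + 1 := by push_cast; ring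
    rw [e1, show -((l : ℝ) + 1) = -(l : ℝ) + -1 by ring,
      Real.rpow_add hq, Real.rpow_add hq, Real.rpow_one, Real.rpow_neg_one, e4]
  -- the key scalar identity
  have key : (q ^ 2 - 1) * (ql - 1) = 1 - q ^ (-(2 * (l : ℝ))) := by
    set u := q ^ (l : ℝ) with hu
    have hww : u * u⁻¹ = 1 := mul_inv_cancel₀ hu0
    have hqq : q * q⁻¹ = 1 := mul_inv_cancel₀ hq0
    have h0 : ql * (q - q⁻¹) = (u * q - u⁻¹ * q⁻¹) * u⁻¹ := by
      rw [hqlval, div_mul_eq_mul_div, div_mul_cancel₀ _ hqi]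
    have h1 : (ql - 1) * (q - q⁻¹) = q⁻¹ - u⁻¹ ^ 2 * q⁻¹ := by
      linear_combination h0 + q * hww
    have h2 : (q ^ 2 - 1) * q⁻¹ = q - q⁻¹ := by linear_combination q * hqq
    have h3 : (q ^ 2 - 1) * (ql - 1) * (q - q⁻¹) = (1 - u⁻¹ ^ 2) * (q - q⁻¹) := by
      linear_combination (q ^ 2 - 1) * h1 + (1 - u⁻¹ ^ 2) * h2
    rw [e5]
    exact mul_right_cancel₀ hqi h3
  -- ql ≠ 0
  have hql0 : ql ≠ 0 := by
    rw [hqlval]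
    have hnum : q ^ (l : ℝ) * q - (q ^ (l : ℝ))⁻¹ * q⁻¹ ≠ 0 := by
      intro h
      have h1 : q ^ ((l : ℝ) + 1) = q ^ (-((l : ℝ) + 1)) := by
        rw [Real.rpow_add hq, Real.rpow_one, show -((l : ℝ) + 1) = -(l : ℝ) + -1 by ring,
          Real.rpow_add hq, Real.rpow_neg_one, e4]
        linarith
      have h2 : q ^ ((l : ℝ) + 1 - -((l : ℝ) + 1)) = 1 := by
        rw [Real.rpow_sub hq, h1, div_self (Real.rpow_pos_of_pos hq _).ne']
      have := rpow_eq_one_imp hq hq1 h2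
      have hl' : (0 : ℝ) < (l : ℝ) := by exact_mod_cast hl
      linarith
    exact mul_ne_zero (div_ne_zero hnum hqi) (inv_ne_zero hu0)
  by_cases h : i + 1 < j
  · -- inductive step
    have IH := Phi_linear_system q hq hq1 l hl n hn y hy ql hql (i + 1) j (by omega) h hj
    rw [Phi, if_pos h, div_mul_cancel₀ _ hD]
    -- split the sum
    have hIoo : Finset.Ioo i j = insert (i + 1) (Finset.Ioo (i + 1) j) := by
      ext k; simp only [Finset.mem_Ioo, Finset.mem_insert]; omega
    have hnotmem : i + 1 ∉ Finset.Ioo (i + 1) j := by simp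
    rw [hIoo, Finset.sum_insert hnotmem]
    have hfirst : ql ^ ((i : ℤ) - ((i + 1 : ℕ) : ℤ)) = ql⁻¹ := by
      rw [show ((i : ℤ) - ((i + 1 : ℕ) : ℤ)) = -1 by push_cast; ring, zpow_neg_one]
    have hterm : ∀ k : ℕ, ql ^ ((i : ℤ) - (k : ℤ)) = ql⁻¹ * ql ^ (((i + 1 : ℕ) : ℤ) - (k : ℤ)) := by
      intro k
      rw [← zpow_neg_one, ← zpow_add₀ hql0]
      congr 1; push_cast; ring
    have hsum : ∑ k ∈ Finset.Ioo (i + 1) j, ql ^ ((i : ℤ) - (k : ℤ)) * Phi q ql l y k j =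
        ql⁻¹ * ∑ k ∈ Finset.Ioo (i + 1) j, ql ^ (((i + 1 : ℕ) : ℤ) - (k : ℤ)) * Phi q ql l y k j := by
      rw [Finset.mul_sum]
      exact Finset.sum_congr rfl fun k _ => by rw [hterm k]; ring
    have hexp : ql ^ ((i : ℤ) - (j : ℤ) + 1) = ql⁻¹ * ql ^ (((i + 1 : ℕ) : ℤ) - (j : ℤ) + 1) := by
      rw [← zpow_neg_one, ← zpow_add₀ hql0]
      congr 1; push_cast; ring
    rw [hfirst, hsum, hexp]
    have hinv : ql⁻¹ * ql = 1 := inv_mul_cancel₀ hql0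
    linear_combination ql⁻¹ * IH - ql⁻¹ * Phi q ql l y (i + 1) j * key
  · -- base case : j = i + 1
    have hj' : j = i + 1 := by omega
    rw [Phi, if_neg h, div_mul_cancel₀ _ hD]
    subst hj'
    have : Finset.Ioo i (i + 1) = ∅ := by
      ext k; simp only [Finset.mem_Ioo, Finset.notMem_empty, iff_false]; omega
    rw [this, Finset.sum_empty, mul_zero, add_zero,
      show ((i : ℤ) - ((i + 1 : ℕ) : ℤ) + 1) = 0 by push_cast; ring, zpow_zero, one_mul]
termination_by j - i
decreasing_by omega
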